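/- Let n be a positive integer, α > 0 a real, and σ_1,…,σ_n > 0 reals; set Λ = diag(σ_1²,…,σ_n²) and P* = diag(min(1/α, σ_1²),…,min(1/α, σ_n²)). Then P* is positive definite, P* ⪯ Λ, and for every symmetric positive definite n×n matrix P with P ⪯ Λ one has Tr(P*) − (1/α)·log det(P*) ≤ Tr(P) − (1/α)·log det(P); that is, P* minimizes P ↦ Tr(P) − (1/α) log det(P) over {P : 0 ≺ P ⪯ Λ}. -/

import Mathlib

open Matrix

/-- Trace of a real symmetric matrix is the sum of its eigenvalues. -/
lemma trace_eq_sum_eigs {n : ℕ} {A : Matrix (Fin n) (Fin n) ℝ} (hA : A.IsHermitian) :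
    A.trace = ∑ i, hA.eigenvalues i := by
  simpa using hA.trace_eq_sum_eigenvalues

/-- Key inequality: for a PSD real matrix with positive determinant,
`log det M ≤ tr M - n`. -/
lemma log_det_le_trace_sub {n : ℕ} {M : Matrix (Fin n) (Fin n) ℝ} (hM : M.PosSemidef)
    (hdet : 0 < M.det) : Real.log M.det ≤ M.trace - n := by
  have hH := hM.isHermitian
  have hdetp : M.det = ∏ i, hH.eigenvalues i := by
    simpa using hH.det_eq_prod_eigenvalues
  have hpos : ∀ i, 0 < hH.eigenvalues i := by
    intro i
    rcases lt_or_eq_of_le (hM.eigenvalues_nonneg i) with h | h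
    · exact h
    · exfalso
      rw [hdetp, Finset.prod_eq_zero (Finset.mem_univ i) h.symm] at hdet
      exact lt_irrefl 0 hdet
  rw [hdetp, Real.log_prod (fun i _ => (hpos i).ne'), trace_eq_sum_eigs hH]
  have : ∑ i, Real.log (hH.eigenvalues i) ≤ ∑ i : Fin n, (hH.eigenvalues i - 1) :=
    Finset.sum_le_sum fun i _ => Real.log_le_sub_one_of_pos (hpos i)
  simpa [Finset.sum_sub_distrib] using this

/-- Diagonal entries of a positive definite real matrix are positive. -/
lemma diag_pos_of_posDef {n : ℕ} {P : Matrix (Fin n) (Fin n) ℝ} (hP : P.PosDef) (i : Fin n) :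
    0 < P i i := by
  have h := hP.dotProduct_mulVec_pos (x := Pi.single i 1) (by simp [Function.ne_iff])
  simpa [dotProduct, Matrix.mulVec, Pi.single_apply, Finset.sum_ite_eq,
    dotProduct_single] using h

/-- Diagonal entries of a positive semidefinite real matrix are nonnegative. -/
lemma diag_nonneg_of_posSemidef {n : ℕ} {Q : Matrix (Fin n) (Fin n) ℝ} (hQ : Q.PosSemidef)
    (i : Fin n) : 0 ≤ Q i i := by
  have h := hQ.dotProduct_mulVec_nonneg (Pi.single i 1)
  simpa [dotProduct, Matrix.mulVec, Pi.single_apply, Finset.sum_ite_eq,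
    dotProduct_single] using h

/-- Let `Λ = diag (σ₁², …, σₙ²)` and
`P* = diag (min (1/α) σ₁², …, min (1/α) σₙ²)` with `α > 0` and `σᵢ > 0`. Then `P* ≻ 0`,
`P* ⪯ Λ`, and `P*` minimizes `P ↦ Tr P − (1/α) log det P` over `{P : 0 ≺ P ⪯ Λ}`. -/
theorem reverse_waterfilling (n : ℕ) (hn : 0 < n) (α : ℝ) (hα : 0 < α)
    (σ : Fin n → ℝ) (hσ : ∀ i, 0 < σ i) :
    (Matrix.diagonal (fun i => min (1 / α) ((σ i) ^ 2))).PosDef ∧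
    (Matrix.diagonal (fun i => (σ i) ^ 2) -
        Matrix.diagonal (fun i => min (1 / α) ((σ i) ^ 2))).PosSemidef ∧
    ∀ P : Matrix (Fin n) (Fin n) ℝ, P.PosDef →
      (Matrix.diagonal (fun i => (σ i) ^ 2) - P).PosSemidef →
      (Matrix.diagonal (fun i => min (1 / α) ((σ i) ^ 2))).trace -
          (1 / α) * Real.log (Matrix.diagonal (fun i => min (1 / α) ((σ i) ^ 2))).det ≤
        P.trace - (1 / α) * Real.log P.det := by
  set q : Fin n → ℝ := fun i => min (1 / α) ((σ i) ^ 2) with hq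
  have hqpos : ∀ i, 0 < q i := fun i =>
    lt_min (by positivity) (pow_pos (hσ i) 2)
  refine ⟨Matrix.PosDef.diagonal hqpos, ?_, ?_⟩
  · rw [Matrix.diagonal_sub]
    refine Matrix.posSemidef_diagonal_iff.mpr fun i => ?_
    simp only [Pi.sub_apply, hq, sub_nonneg]
    exact min_le_right _ _
  · intro P hP hPle
    -- diagonal bounds for P
    have hPdiag_pos : ∀ i, 0 < P i i := diag_pos_of_posDef hP
    have hPdiag_le : ∀ i, P i i ≤ (σ i) ^ 2 := by
      intro i
      have := diag_nonneg_of_posSemidef hPle i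
      simp only [Matrix.sub_apply, Matrix.diagonal_apply_eq] at this
      linarith
    -- congruence matrix
    set d : Fin n → ℝ := fun i => Real.sqrt (q i)⁻¹ with hd
    have hdpos : ∀ i, 0 < d i := fun i => Real.sqrt_pos.mpr (inv_pos.mpr (hqpos i))
    have hdsq : ∀ i, d i * d i = (q i)⁻¹ := fun i =>
      Real.mul_self_sqrt (inv_nonneg.mpr (hqpos i).le)
    set D : Matrix (Fin n) (Fin n) ℝ := Matrix.diagonal d with hD
    have hDH : Dᴴ = D := by
      simp [hD, Matrix.diagonal_conjTranspose]
    set M : Matrix (Fin n) (Fin n) ℝ := D * P * D with hM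
    have hMpsd : M.PosSemidef := by
      have := hP.posSemidef.mul_mul_conjTranspose_same D
      rwa [hDH] at this
    have hPdet : 0 < P.det := hP.det_pos
    have hDdet : D.det = ∏ i, d i := by simp [hD]
    have hMdet : M.det = (∏ i, d i) * P.det * (∏ i, d i) := by
      rw [hM, Matrix.det_mul, Matrix.det_mul, hDdet]
    have hproddet : 0 < ∏ i, d i := Finset.prod_pos fun i _ => hdpos i
    have hMdetpos : 0 < M.det := by rw [hMdet]; positivity
    -- trace of M
    have hMtrace : M.trace = ∑ i, (q i)⁻¹ * P i i := by
      rw [hM, Matrix.trace_mul_cycle, hD, Matrix.diagonal_mul_diagonal]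
      rw [Matrix.trace]
      congr 1
      ext i
      simp [Matrix.diag, Matrix.diagonal_mul, hdsq i]
    -- det of M and logs
    have hlogd' : Real.log (∏ i, d i) = -(∑ i, Real.log (q i)) / 2 := by
      rw [Real.log_prod fun i _ => (hdpos i).ne']
      have hld : ∀ i, Real.log (d i) = -Real.log (q i) / 2 := by
        intro i
        simp only [hd]
        rw [Real.log_sqrt (inv_nonneg.mpr (hqpos i).le), Real.log_inv]
      simp only [hld]
      rw [← Finset.sum_div, ← Finset.sum_neg_distrib]
    have hlogM : Real.log M.det = Real.log P.det - ∑ i, Real.log (q i) := by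
      rw [hMdet, Real.log_mul (mul_ne_zero hproddet.ne' hPdet.ne') hproddet.ne',
        Real.log_mul hproddet.ne' hPdet.ne', hlogd']
      ring
    -- key inequality
    have hkey := log_det_le_trace_sub hMpsd hMdetpos
    rw [hlogM, hMtrace] at hkey
    -- per-coordinate inequality
    have hterm : ∀ i, q i - (1 / α) * Real.log (q i) ≤
        P i i - (1 / α) * (Real.log (q i) + (q i)⁻¹ * P i i - 1) := by
      intro i
      have hqi := hqpos i
      have hpi := hPdiag_pos i
      have hple := hPdiag_le i
      have h1 : (1 / α) * ((q i)⁻¹ * P i i - 1) = (1 / (α * q i)) * (P i i - q i) := by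
        field_simp
      rcases le_total (1 / α) ((σ i) ^ 2) with h | h
      · have hqe : q i = 1 / α := min_eq_left h
        rw [hqe] at h1 ⊢
        have : (1 / (α * (1 / α))) * (P i i - 1 / α) = P i i - 1 / α := by
          field_simp
        nlinarith [this]
      · have hqe : q i = (σ i) ^ 2 := min_eq_right h
        -- P i i ≤ q i and 1/(α * q i) ≥ 1
        have hple' : P i i ≤ q i := by rw [hqe]; exact hple
        have hαq : α * q i ≤ 1 := by
          rw [hqe]
          calc α * (σ i) ^ 2 ≤ α * (1 / α) := by
                apply mul_le_mul_of_nonneg_left h hα.le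
            _ = 1 := by field_simp
        have hαqpos : 0 < α * q i := mul_pos hα hqi
        have hfac : 1 ≤ 1 / (α * q i) := (one_le_div hαqpos).mpr hαq
        have hprod : 0 ≤ (1 / (α * q i) - 1) * (q i - P i i) :=
          mul_nonneg (by linarith) (by linarith)
        nlinarith [hprod, h1]
    -- assemble
    have hLtrace : (Matrix.diagonal q).trace = ∑ i, q i := Matrix.trace_diagonal q
    have hLdet : Real.log (Matrix.diagonal q).det = ∑ i, Real.log (q i) := by
      rw [Matrix.det_diagonal, Real.log_prod (fun i _ => (hqpos i).ne')]
    have hPtrace : P.trace = ∑ i, P i i := by rw [Matrix.trace]; rfl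
    rw [hLtrace, hLdet, hPtrace]
    have hαinv : 0 ≤ 1 / α := by positivity
    -- from hkey: log det P ≤ ∑ log q + ∑ q⁻¹ P - n
    have hkey' : (1 / α) * Real.log P.det ≤
        (1 / α) * (∑ i, Real.log (q i) + ∑ i, (q i)⁻¹ * P i i - n) := by
      apply mul_le_mul_of_nonneg_left _ hαinv
      linarith
    have hsum' : ∑ i, (q i - (1 / α) * Real.log (q i)) ≤
        ∑ i, (P i i - (1 / α) * (Real.log (q i) + (q i)⁻¹ * P i i - 1)) :=
      Finset.sum_le_sum fun i _ => hterm i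
    simp only [Finset.sum_sub_distrib, ← Finset.mul_sum, Finset.sum_add_distrib,
      mul_add, mul_sub, Finset.sum_const, Finset.card_univ, Fintype.card_fin,
      nsmul_eq_mul, mul_one] at hsum' hkey' ⊢
    linarith
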